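/- Let α, c, r > 0, κ ∈ (0,1/2], and let (b_k)_{k≥0} be nonnegative reals with b_0 > 0. Set η_k = (κ/2)^k·r and a_k = η_k^{−α}·b_k, and suppose a_k ≥ c·∑_{l=0}^{k-1} a_l for all k ≥ 1. Define γ := α − ln(1 + c) / ln(2/κ). Then γ < α and for every k ≥ 1, b_k ≥ (c/(1+c))·(η_k/r)^γ · b_0. -/

import Mathlib

theorem stmt_16 (α c r κ : ℝ) (hα : 0 < α) (hc : 0 < c) (hr : 0 < r)
    (hκ : κ ∈ Set.Ioc (0:ℝ) (1/2))
    (b : ℕ → ℝ) (hb : ∀ k, 0 ≤ b k) (hb0 : 0 < b 0)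
    (η a : ℕ → ℝ) (hη : ∀ k, η k = (κ / 2) ^ k * r)
    (ha : ∀ k, a k = (η k) ^ (-α) * b k)
    (hrec : ∀ k, 1 ≤ k → c * ∑ l ∈ Finset.range k, a l ≤ a k)
    (γ : ℝ) (hγ : γ = α - Real.log (1 + c) / Real.log (2 / κ)) :
    γ < α ∧ ∀ k, 1 ≤ k → (c / (1 + c)) * (η k / r) ^ γ * b 0 ≤ b k := by
  obtain ⟨hκ0, hκ2⟩ := hκ
  set q := κ / 2 with hq
  have hq0 : 0 < q := by positivity
  have hq1 : q < 1 := by rw [hq]; linarith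
  have hlogq : Real.log q < 0 := Real.log_neg hq0 hq1
  have hL : Real.log (2 / κ) = -Real.log q := by
    rw [Real.log_div two_ne_zero hκ0.ne', hq, Real.log_div hκ0.ne' two_ne_zero]; ring
  have h1c : (1:ℝ) < 1 + c := by linarith
  have hlog1c : 0 < Real.log (1 + c) := Real.log_pos h1c
  have hγα : γ < α := by
    rw [hγ]
    have : 0 < Real.log (1+c) / Real.log (2/κ) := by
      apply div_pos hlog1c; rw [hL]; linarith
    linarith
  refine ⟨hγα, ?_⟩
  have hkey : (γ - α) * Real.log q = Real.log (1 + c) := by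
    rw [hγ, hL]
    field_simp
    rw [show α - -(Real.log (1 + c) / Real.log q) - α = Real.log (1 + c) / Real.log q by ring,
      mul_comm, div_mul_cancel₀ _ hlogq.ne]
  have hη0 : η 0 = r := by rw [hη]; simp
  have hηpos : ∀ k, 0 < η k := fun k => by rw [hη]; positivity
  have ha0 : 0 < a 0 := by
    rw [ha, hη0]; exact mul_pos (Real.rpow_pos_of_pos hr _) hb0
  have hapos : ∀ l, 0 ≤ a l := fun l =>
    (ha l) ▸ mul_nonneg (Real.rpow_pos_of_pos (hηpos l) _).le (hb l)
  have hS : ∀ k, 1 ≤ k → (1+c)^(k-1) * a 0 ≤ ∑ l ∈ Finset.range k, a l := by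
    intro k hk
    induction k with
    | zero => omega
    | succ n ih =>
      rcases Nat.lt_or_ge 1 (n+1) with h | h
      · have hn : 1 ≤ n := by omega
        have ihn := ih hn
        have hrecn := hrec n hn
        rw [Finset.sum_range_succ]
        have hexp : n + 1 - 1 = n - 1 + 1 := by omega
        rw [hexp]
        calc (1+c)^(n-1+1) * a 0 = (1+c) * ((1+c)^(n-1) * a 0) := by ring
          _ ≤ (1+c) * ∑ l ∈ Finset.range n, a l :=
              mul_le_mul_of_nonneg_left ihn (by linarith)
          _ = ∑ l ∈ Finset.range n, a l + c * ∑ l ∈ Finset.range n, a l := by ring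
          _ ≤ ∑ l ∈ Finset.range n, a l + a n := by linarith
      · have : n = 0 := by omega
        subst this; simp
  intro k hk
  have hak : c * ((1+c)^(k-1) * a 0) ≤ a k :=
    le_trans (mul_le_mul_of_nonneg_left (hS k hk) hc.le) (hrec k hk)
  -- b k = η k ^ α * a k
  have hbk : b k = (η k) ^ α * a k := by
    rw [ha k, ← mul_assoc, ← Real.rpow_add (hηpos k), add_neg_cancel, Real.rpow_zero, one_mul]
  -- (η k / r) = q ^ k
  have hηr : η k / r = q ^ k := by rw [hη]; field_simp
  -- key rpow identity
  have hpow : ∀ x : ℝ, ((q:ℝ) ^ k) ^ x = q ^ ((k:ℝ) * x) := fun x => by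
    rw [← Real.rpow_natCast q k, ← Real.rpow_mul hq0.le]
  have hid : (q ^ k : ℝ) ^ γ = (1+c)^k * (q ^ k : ℝ) ^ α := by
    rw [hpow, hpow]
    have : (k:ℝ) * γ = (k:ℝ) * (γ - α) + (k:ℝ) * α := by ring
    rw [this, Real.rpow_add hq0]
    congr 1
    rw [Real.rpow_def_of_pos hq0,
      show Real.log q * ((k:ℝ) * (γ - α)) = (k:ℝ) * ((γ - α) * Real.log q) by ring,
      hkey, Real.exp_nat_mul, Real.exp_log (by linarith)]
  -- a 0 = r^(-α) * b 0, and η k ^ α * r ^ (-α) = (η k / r) ^ α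
  have hdiv : ((η k) / r) ^ α = (η k) ^ α * r ^ (-α) := by
    rw [Real.div_rpow (hηpos k).le hr.le, Real.rpow_neg hr.le, div_eq_mul_inv]
  have ha0e : a 0 = r ^ (-α) * b 0 := by rw [ha, hη0]
  have hfinal : (c / (1 + c)) * (η k / r) ^ γ * b 0
      = (η k) ^ α * (c * ((1+c)^(k-1) * a 0)) := by
    rw [hηr, hid, ← hηr, hdiv, ha0e]
    have : (1+c) * (1+c)^(k-1) = (1+c)^k := by
      rw [← pow_succ']
      congr 1
      omega
    field_simp
    rw [← this]
    ring
  rw [hfinal, hbk]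
  exact mul_le_mul_of_nonneg_left hak (Real.rpow_pos_of_pos (hηpos k) α).le
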